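/- Assume Fix(T, P_U) ≠ ∅ and that the error bound EB holds with constant ω ∈ (0, 1]. Then for every x ∈ U and every circumcenter c for x (i.e. c in the affine span of {x, R(x), R_U(R(x))} with ‖c − x‖ = ‖c − R(x)‖ = ‖c − R_U(R(x))‖): dist(c, Fix(T, P_U))² ≤ dist(S(x), Fix(T, P_U))² ≤ (1 − ω²) · dist(x, Fix(T, P_U))². -/

import Mathlib

open RealInnerProductSpace


/-- An operator is firmly nonexpansive if
`‖T x - T y‖² ≤ ‖x - y‖² - ‖(T x - T y) - (x - y)‖²` for all `x, y`. -/
def FirmlyNonexpansive {n : ℕ} (T : EuclideanSpace ℝ (Fin n) → EuclideanSpace ℝ (Fin n)) : Prop :=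
  ∀ x y, ‖T x - T y‖ ^ 2 ≤ ‖x - y‖ ^ 2 - ‖(T x - T y) - (x - y)‖ ^ 2

/-- `P` is the orthogonal projection onto `C`: for each `x`, `P x ∈ C` and `P x`
minimizes the distance from `x` to points of `C`. -/
def IsProjOn {n : ℕ} (C : Set (EuclideanSpace ℝ (Fin n)))
    (P : EuclideanSpace ℝ (Fin n) → EuclideanSpace ℝ (Fin n)) : Prop :=
  ∀ x, P x ∈ C ∧ ∀ y ∈ C, ‖x - P x‖ ≤ ‖x - y‖

lemma perp_of_proj {n : ℕ} {U : Set (EuclideanSpace ℝ (Fin n))}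
    (hUaff : ∀ x ∈ U, ∀ y ∈ U, ∀ t : ℝ, t • x + (1 - t) • y ∈ U)
    {PU : EuclideanSpace ℝ (Fin n) → EuclideanSpace ℝ (Fin n)}
    (hPU : IsProjOn U PU) (w : EuclideanSpace ℝ (Fin n)) :
    ∀ u ∈ U, ⟪w - PU w, u - PU w⟫ = 0 := by
  intro u hu
  set p := PU w with hp
  set q : ℝ := ⟪w - p, u - p⟫ with hq
  set r : ℝ := ‖u - p‖^2 with hr
  have hr0 : 0 ≤ r := by positivity
  have hkey : ∀ t : ℝ, 2*t*q ≤ t^2*r := by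
    intro t
    have hmem : t • u + (1 - t) • p ∈ U := hUaff u hu p (hPU w).1 t
    have hle : ‖w - p‖ ≤ ‖w - (t • u + (1 - t) • p)‖ := (hPU w).2 _ hmem
    have hveq : w - (t • u + (1 - t) • p) = (w - p) - t • (u - p) := by
      module
    have hsq : ‖w - p‖^2 ≤ ‖(w - p) - t • (u - p)‖^2 := by
      rw [← hveq]; exact pow_le_pow_left₀ (norm_nonneg _) hle 2
    have hns : ‖t • (u - p)‖^2 = t^2*r := by
      rw [norm_smul]
      simp only [Real.norm_eq_abs, mul_pow, sq_abs]
      rfl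
    have hexp : ‖(w - p) - t • (u - p)‖^2 = ‖w - p‖^2 - 2*(t*q) + t^2*r := by
      rw [norm_sub_sq_real, real_inner_smul_right, hns]
    rw [hexp] at hsq
    linarith
  have hr1 : (0:ℝ) < r + 1 := by linarith
  have h := hkey (q/(r+1))
  have ht0 : (q/(r+1))*(r+1) = q := by field_simp
  nlinarith [sq_nonneg (q/(r+1)), sq_nonneg q]

lemma proj_eq_of_perp {n : ℕ} {U : Set (EuclideanSpace ℝ (Fin n))}
    {PU : EuclideanSpace ℝ (Fin n) → EuclideanSpace ℝ (Fin n)}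
    (hPU : IsProjOn U PU) (w p : EuclideanSpace ℝ (Fin n)) (hp : p ∈ U)
    (hperp : ∀ u ∈ U, ⟪w - p, u - p⟫ = 0) : PU w = p := by
  have hle : ‖w - PU w‖ ≤ ‖w - p‖ := (hPU w).2 p hp
  have hid : ‖w - PU w‖^2 = ‖w - p‖^2 + ‖PU w - p‖^2 := by
    have hveq : w - PU w = (w - p) - (PU w - p) := by module
    rw [hveq, norm_sub_sq_real, hperp _ (hPU w).1]
    ring
  have h0 : ‖PU w - p‖^2 ≤ 0 := by
    nlinarith [pow_le_pow_left₀ (norm_nonneg (w - PU w)) hle 2]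
  have hn : ‖PU w - p‖ = 0 := by
    nlinarith [norm_nonneg (PU w - p), sq_nonneg ‖PU w - p‖]
  have : PU w - p = 0 := norm_eq_zero.mp hn
  exact sub_eq_zero.mp this

/-- expansion of a norm-square of a combination `α•u + β•v - w` with `u ⟂ v`. -/
lemma expand3 {n : ℕ} (u v w : EuclideanSpace ℝ (Fin n)) (α β : ℝ) (huv : ⟪u,v⟫ = 0) :
    ‖α•u + β•v - w‖^2 =
      α^2*‖u‖^2 + β^2*‖v‖^2 + ‖w‖^2 - 2*α*⟪u,w⟫ - 2*β*⟪v,w⟫ := by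
  have h1 : ‖α•u + β•v - w‖^2 = ⟪α•u + β•v - w, α•u + β•v - w⟫ :=
    (real_inner_self_eq_norm_sq _).symm
  rw [h1]
  simp only [inner_sub_left, inner_sub_right, inner_add_left, inner_add_right,
    real_inner_smul_left, real_inner_smul_right]
  rw [real_inner_self_eq_norm_sq, real_inner_self_eq_norm_sq,
    real_inner_self_eq_norm_sq]
  have hvu : (inner ℝ v u : ℝ) = 0 := by rw [real_inner_comm]; exact huv
  have hwu : (inner ℝ w u : ℝ) = inner ℝ u w := real_inner_comm u w
  have hwv : (inner ℝ w v : ℝ) = inner ℝ v w := real_inner_comm v w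
  rw [huv, hvu, hwu, hwv]
  ring

lemma le_infDist' {α : Type*} [PseudoMetricSpace α] {s : Set α} (hs : s.Nonempty) {x : α}
    {b : ℝ} (h : ∀ y ∈ s, b ≤ dist x y) : b ≤ Metric.infDist x s := by
  rw [Metric.infDist_eq_iInf]
  have : Nonempty s := hs.to_subtype
  exact le_ciInf (fun y => h y y.2)

/-- the scalar inequality at the heart of the circumcenter estimate. -/
lemma scalar_ineq (A E Q σ τ : ℝ) (hA : 0 ≤ A) (hE : 0 ≤ E)
    (hσE : σ * E = 0) (hAE : A - 2*τ*A = E) (hQ : 2*Q ≤ A - E)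
    (hAQ : A = 0 → Q = 0) :
    σ^2*E + τ^2*A - 2*τ*Q ≤ A/4 - Q := by
  have hσ2 : σ^2*E = 0 := by
    have : σ^2*E = σ*(σ*E) := by ring
    rw [this, hσE, mul_zero]
  rw [hσ2]
  rcases eq_or_lt_of_le hA with h0 | hpos
  · have hA0 : A = 0 := h0.symm
    have hQ0 : Q = 0 := hAQ hA0
    have hE0 : E = 0 := by rw [← hAE, hA0]; ring
    rw [hA0, hQ0]; ring_nf; simp
  · have h2τ : 0 ≤ 1 - 2*τ := by
      by_contra hcon
      push_neg at hcon
      nlinarith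
    have hQτ : Q ≤ τ*A := by nlinarith
    nlinarith [mul_nonneg h2τ (by linarith : (0:ℝ) ≤ τ*A - Q),
      mul_nonneg (sq_nonneg (τ - 1/2)) hA]

set_option maxHeartbeats 2000000

/-- Under the error bound EB with constant `ω ∈ (0, 1]`, one step of CRM (any
circumcenter `c` of `x`, `R(x)`, `R_U(R(x))` for `x ∈ U`) and one step of MAP
(`S(x) = P_U(T(x))`) satisfy
`dist(c, Fix)² ≤ dist(S(x), Fix)² ≤ (1 − ω²)·dist(x, Fix)²`. -/
theorem crm_map_linear_rate {n : ℕ}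
    (T : EuclideanSpace ℝ (Fin n) → EuclideanSpace ℝ (Fin n))
    (hT : FirmlyNonexpansive T)
    (U : Set (EuclideanSpace ℝ (Fin n))) (hUne : U.Nonempty)
    (hUaff : ∀ x ∈ U, ∀ y ∈ U, ∀ t : ℝ, t • x + (1 - t) • y ∈ U)
    (PU : EuclideanSpace ℝ (Fin n) → EuclideanSpace ℝ (Fin n))
    (hPU : IsProjOn U PU)
    (R RU : EuclideanSpace ℝ (Fin n) → EuclideanSpace ℝ (Fin n))
    (hR : ∀ w, R w = (2 : ℝ) • T w - w) (hRU : ∀ w, RU w = (2 : ℝ) • PU w - w)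
    (hfix : ∃ y, T y = y ∧ y ∈ U)
    (ω : ℝ) (hω : ω ∈ Set.Ioc (0 : ℝ) 1)
    (hEB : ∀ x ∈ U,
      ω * Metric.infDist x {w : EuclideanSpace ℝ (Fin n) | T w = w ∧ w ∈ U} ≤ ‖x - T x‖)
    (x c : EuclideanSpace ℝ (Fin n)) (hx : x ∈ U)
    (hspan : c ∈ affineSpan ℝ ({x, R x, RU (R x)} : Set (EuclideanSpace ℝ (Fin n))))
    (h1 : ‖c - x‖ = ‖c - R x‖) (h2 : ‖c - x‖ = ‖c - RU (R x)‖) :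
    Metric.infDist c {w : EuclideanSpace ℝ (Fin n) | T w = w ∧ w ∈ U} ^ 2 ≤
        Metric.infDist (PU (T x)) {w : EuclideanSpace ℝ (Fin n) | T w = w ∧ w ∈ U} ^ 2 ∧
      Metric.infDist (PU (T x)) {w : EuclideanSpace ℝ (Fin n) | T w = w ∧ w ∈ U} ^ 2 ≤
        (1 - ω ^ 2) *
          Metric.infDist x {w : EuclideanSpace ℝ (Fin n) | T w = w ∧ w ∈ U} ^ 2 := by
  obtain ⟨z₀, hz₀T, hz₀U⟩ := hfix
  set F : Set (EuclideanSpace ℝ (Fin n)) := {w | T w = w ∧ w ∈ U} with hF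
  have Fne : F.Nonempty := ⟨z₀, hz₀T, hz₀U⟩
  have hperpU := perp_of_proj hUaff hPU
  -- notation
  set y : EuclideanSpace ℝ (Fin n) := R x with hy
  set m : EuclideanSpace ℝ (Fin n) := PU y with hm
  have hmU : m ∈ U := (hPU y).1
  set av : EuclideanSpace ℝ (Fin n) := x - m with hav
  set e : EuclideanSpace ℝ (Fin n) := y - m with he
  have heav : ⟪e, av⟫ = 0 := hperpU y x hx
  have hTx : T x = m + (1/2:ℝ)•av + (1/2:ℝ)•e := by
    have h : y = (2:ℝ)•(T x) - x := by rw [hy, hR x]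
    have h2 : (2:ℝ)•(T x) = y + x := by rw [h]; abel
    have h3 : T x = (1/2:ℝ)•((2:ℝ)•(T x)) := by rw [smul_smul]; norm_num
    rw [h3, h2, hav, he]; module
  have hy' : RU y = m - e := by rw [hRU y, hm, he]; module
  have hxm : x = m + av := by rw [hav]; abel
  have hae : ⟪av, e⟫ = (0:ℝ) := by rw [real_inner_comm]; exact heav
  have hSx : PU (T x) = m + (1/2:ℝ)•av := by
    apply proj_eq_of_perp hPU
    · have h12 : m + (1/2:ℝ)•av = (1/2:ℝ)•x + (1-(1/2:ℝ))•m := by rw [hav]; module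
      rw [h12]; exact hUaff x hx m hmU (1/2)
    · intro u hu
      have hTp : T x - (m + (1/2:ℝ)•av) = (1/2:ℝ)•e := by rw [hTx]; module
      have hup : u - (m + (1/2:ℝ)•av) = (u - m) - (1/2:ℝ)•av := by module
      have h5 : ⟪e, u - m⟫ = (0:ℝ) := hperpU y u hu
      rw [hTp, hup, real_inner_smul_left, inner_sub_right, h5, real_inner_smul_right, heav]
      ring
  have haux : ∀ z, T z = z → ⟪x - T x, z - T x⟫ ≤ 0 := by
    intro z hz
    have h := hT x z
    rw [hz] at h
    have expand : ‖T x - z‖^2 - ‖x - z‖^2 + ‖(T x - z) - (x - z)‖^2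
        = 2*⟪x - T x, z - T x⟫ := by
      rw [show T x - z = -(z - T x) from by abel,
        show x - z = (x - T x) - (z - T x) from by abel,
        show -(z - T x) - ((x - T x) - (z - T x)) = -(x - T x) from by abel,
        norm_neg, norm_neg, norm_sub_sq_real (x - T x) (z - T x)]
      ring
    linarith
  have hPUdec : ∀ w z, z ∈ U → ‖PU w - z‖^2 ≤ ‖w - z‖^2 := by
    intro w z hz
    have hp := hperpU w z hz
    have hinner : ⟪w - PU w, PU w - z⟫ = (0:ℝ) := by
      rw [show PU w - z = -(z - PU w) from by abel, inner_neg_right, hp, neg_zero]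
    have hid : ‖w - z‖^2 = ‖w - PU w‖^2 + ‖PU w - z‖^2 := by
      rw [show w - z = (w - PU w) + (PU w - z) from by abel, norm_add_sq_real, hinner]
      ring
    nlinarith [sq_nonneg ‖w - PU w‖]
  have hptA : ∀ z, T z = z → z ∈ U → ‖c - z‖^2 ≤ ‖PU (T x) - z‖^2 := by
    intro z hzT hzU
    set wv : EuclideanSpace ℝ (Fin n) := z - m with hwv
    have hew : ⟪e, wv⟫ = (0:ℝ) := hperpU y z hzU
    have hc1 : c -ᵥ x ∈ (affineSpan ℝ ({x, y, RU y} : Set (EuclideanSpace ℝ (Fin n)))).direction :=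
      AffineSubspace.vsub_mem_direction hspan (mem_affineSpan ℝ (by simp))
    rw [direction_affineSpan] at hc1
    have hspan2 : vectorSpan ℝ ({x, y, RU y} : Set (EuclideanSpace ℝ (Fin n)))
        ≤ Submodule.span ℝ ({e, av} : Set (EuclideanSpace ℝ (Fin n))) := by
      rw [vectorSpan_def]
      apply Submodule.span_le.mpr
      have hmem : ∀ a ∈ ({x, y, RU y} : Set (EuclideanSpace ℝ (Fin n))),
          a - m ∈ Submodule.span ℝ ({e, av} : Set (EuclideanSpace ℝ (Fin n))) := by
        rintro a ha
        simp only [Set.mem_insert_iff, Set.mem_singleton_iff] at ha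
        rcases ha with rfl | rfl | rfl
        · exact Submodule.mem_span_pair.mpr ⟨0, 1, by rw [hav]; module⟩
        · exact Submodule.mem_span_pair.mpr ⟨1, 0, by rw [he]; module⟩
        · exact Submodule.mem_span_pair.mpr ⟨-1, 0, by rw [hy', he]; module⟩
      rintro v ⟨a, ha, b, hb, rfl⟩
      have h := Submodule.sub_mem _ (hmem a ha) (hmem b hb)
      rw [show a - m - (b - m) = a - b from by abel] at h
      simpa [vsub_eq_sub] using h
    have hc2 : c - x ∈ Submodule.span ℝ ({e, av} : Set (EuclideanSpace ℝ (Fin n))) :=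
      hspan2 hc1
    obtain ⟨σ, τ', hστ⟩ := Submodule.mem_span_pair.mp hc2
    set τ : ℝ := τ' + 1 with hτ
    have vc_x : c - x = σ•e + (τ-1)•av := by rw [← hστ, hτ]; module
    have vc_y : c - y = (σ-1)•e + τ•av := by
      rw [show c - y = (c - x) + (x - y) from by abel, ← hστ,
        show x - y = av - e from by rw [hav, he]; abel, hτ]
      module
    have vc_y' : c - RU y = (σ+1)•e + τ•av := by
      rw [show c - RU y = (c - x) + (x - RU y) from by abel, ← hστ,
        show x - RU y = av + e from by rw [hy', hav, he]; module, hτ]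
      module
    have vc_z : c - z = σ•e + τ•av - wv := by
      rw [show c - z = (c - x) + (x - m) - (z - m) from by abel, ← hστ, ← hav, ← hwv, hτ]
      module
    have vp_z : PU (T x) - z = (0:ℝ)•e + (1/2:ℝ)•av - wv := by
      rw [hSx, hwv]; module
    have expand2 : ∀ (α β : ℝ), ‖α•e + β•av‖^2 = α^2*‖e‖^2 + β^2*‖av‖^2 := by
      intro α β
      have h := expand3 e av 0 α β heav
      simpa using h
    have eq1 : σ^2*‖e‖^2 + (τ-1)^2*‖av‖^2 = (σ-1)^2*‖e‖^2 + τ^2*‖av‖^2 := by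
      have h1' : ‖c - x‖^2 = ‖c - y‖^2 := by rw [h1]
      rw [vc_x, vc_y, expand2, expand2] at h1'
      exact h1'
    have eq2 : σ^2*‖e‖^2 + (τ-1)^2*‖av‖^2 = (σ+1)^2*‖e‖^2 + τ^2*‖av‖^2 := by
      have h2' : ‖c - x‖^2 = ‖c - RU y‖^2 := by rw [h2]
      rw [vc_x, vc_y', expand2, expand2] at h2'
      exact h2'
    have hσE : σ * ‖e‖^2 = 0 := by linear_combination (eq1 - eq2) / 4
    have hAE : ‖av‖^2 - 2*τ*‖av‖^2 = ‖e‖^2 := by linear_combination eq1 - 2*hσE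
    have hQ : 2*⟪av, wv⟫ ≤ ‖av‖^2 - ‖e‖^2 := by
      have h := haux z hzT
      have hxT : x - T x = (1/2:ℝ)•av - (1/2:ℝ)•e := by
        rw [hTx, hxm]; module
      have hzT2 : z - T x = wv - (1/2:ℝ)•av - (1/2:ℝ)•e := by
        rw [hTx, hwv]; module
      rw [hxT, hzT2] at h
      simp only [inner_sub_left, inner_sub_right, real_inner_smul_left,
        real_inner_smul_right] at h
      simp only [hae, heav, hew, real_inner_self_eq_norm_sq] at h
      have haw : (inner ℝ av wv : ℝ) = ⟪av, wv⟫ := rfl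
      nlinarith [h]
    have hAQ : ‖av‖^2 = 0 → ⟪av, wv⟫ = (0:ℝ) := by
      intro h0
      have : av = 0 := by
        have := pow_eq_zero_iff (n := 2) (by norm_num) |>.mp h0
        exact norm_eq_zero.mp this
      rw [this, inner_zero_left]
    have key := scalar_ineq (‖av‖^2) (‖e‖^2) (⟪av, wv⟫) σ τ (by positivity) (by positivity)
      hσE hAE hQ hAQ
    have hgoalL : ‖c - z‖^2 = σ^2*‖e‖^2 + τ^2*‖av‖^2 + ‖wv‖^2
        - 2*σ*⟪e, wv⟫ - 2*τ*⟪av, wv⟫ := by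
      rw [vc_z, expand3 e av wv σ τ heav]
    have hgoalR : ‖PU (T x) - z‖^2 = (0:ℝ)^2*‖e‖^2 + (1/2:ℝ)^2*‖av‖^2 + ‖wv‖^2
        - 2*0*⟪e, wv⟫ - 2*(1/2:ℝ)*⟪av, wv⟫ := by
      rw [vp_z, expand3 e av wv 0 (1/2:ℝ) heav]
    rw [hgoalL, hgoalR, hew]
    linarith
  have hptB : ∀ z, z ∈ F → ‖PU (T x) - z‖^2 ≤ ‖x - z‖^2 - ‖x - T x‖^2 := by
    intro z hz
    obtain ⟨hzT, hzU⟩ := hz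
    have h := hT x z
    rw [hzT] at h
    have hrev : ‖(T x - z) - (x - z)‖ = ‖x - T x‖ := by
      rw [show (T x - z) - (x - z) = -(x - T x) from by abel, norm_neg]
    rw [hrev] at h
    have := hPUdec (T x) z hzU
    linarith
  constructor
  · have hle : Metric.infDist c F ≤ Metric.infDist (PU (T x)) F := by
      apply le_infDist' Fne
      intro z hz
      obtain ⟨hzT, hzU⟩ := hz
      have h := hptA z hzT hzU
      have hd : Metric.infDist c F ≤ dist c z := Metric.infDist_le_dist_of_mem ⟨hzT, hzU⟩
      have hdd : dist c z ≤ dist (PU (T x)) z := by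
        rw [dist_eq_norm, dist_eq_norm]
        nlinarith [norm_nonneg (c - z), norm_nonneg (PU (T x) - z)]
      linarith
    exact pow_le_pow_left₀ Metric.infDist_nonneg hle 2
  · have hkey : ∀ z ∈ F, Metric.infDist (PU (T x)) F ^2 + ‖x - T x‖^2 ≤ ‖x - z‖^2 := by
      intro z hz
      have h1' : Metric.infDist (PU (T x)) F ≤ dist (PU (T x)) z :=
        Metric.infDist_le_dist_of_mem hz
      have h2' := hptB z hz
      have h3' : Metric.infDist (PU (T x)) F ^2 ≤ ‖PU (T x) - z‖^2 := by
        rw [← dist_eq_norm]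
        exact pow_le_pow_left₀ Metric.infDist_nonneg h1' 2
      linarith
    have hB : (0:ℝ) ≤ Metric.infDist (PU (T x)) F ^2 + ‖x - T x‖^2 := by positivity
    have hsq : Real.sqrt (Metric.infDist (PU (T x)) F ^2 + ‖x - T x‖^2)
        ≤ Metric.infDist x F := by
      apply le_infDist' Fne
      intro z hz
      rw [dist_eq_norm]
      calc Real.sqrt (Metric.infDist (PU (T x)) F ^2 + ‖x - T x‖^2)
          ≤ Real.sqrt (‖x - z‖^2) := Real.sqrt_le_sqrt (hkey z hz)
        _ = ‖x - z‖ := Real.sqrt_sq (norm_nonneg _)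
    have h6 : Metric.infDist (PU (T x)) F ^2 + ‖x - T x‖^2 ≤ Metric.infDist x F ^2 := by
      have h7 := pow_le_pow_left₀ (Real.sqrt_nonneg _) hsq 2
      rwa [Real.sq_sqrt hB] at h7
    have h7 := hEB x hx
    have h8 : ω^2 * Metric.infDist x F ^2 ≤ ‖x - T x‖^2 := by
      nlinarith [mul_self_le_mul_self (mul_nonneg hω.1.le Metric.infDist_nonneg) h7]
    nlinarith
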